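/- Let S_a(x,z,y,v) = K·Ḡ + J_a(x,z,y,v) where Ḡ ≥ 0 is a constant and J_a is the nonnegative-coefficient linear combination of f-terms defined earlier, and suppose L_r·L_s ≤ K. Then sup_{x,z} inf_{y,v} S_a(x,z,y,v) = K·Ḡ, and any (x,z) with all phase-slope differences Δx_w, Δz_p, Δx_w ± Δz_p in 𝒳* attains the supremum; moreover for such (x,z), S_a(x,z,y,v) = K·Ḡ for every (y,v). -/

import Mathlib

open MeasureTheory Real Finset

/-- f(x,y) = Σ_{k=0}^{K-1} cos(y - 2kx). -/
noncomputable def fK (K : ℕ) (x y : ℝ) : ℝ :=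
  ∑ k ∈ Finset.range K, Real.cos (y - 2 * (k : ℝ) * x)

/-- the hypercube [0, 2π)^L. -/
def cube (L : ℕ) : Set (Fin L → ℝ) := Set.univ.pi fun _ => Set.Ico 0 (2 * Real.pi)

/-- 𝒳* = {qπ/K : q ∈ ℤ} \ {nπ : n ∈ ℤ}. -/
def Xstar (K : ℕ) : Set ℝ :=
  {r | (∃ q : ℤ, r = (q : ℝ) * Real.pi / K) ∧ ∀ n : ℤ, r ≠ (n : ℝ) * Real.pi}

/-- the representative of a modulo π lying in [0, π). -/
noncomputable def modpi (a : ℝ) : ℝ := a - Real.pi * ⌊a / Real.pi⌋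

/-- the set of ordered index pairs (first strictly less than second). -/
def pairs (L : ℕ) : Finset (Fin L × Fin L) := Finset.univ.filter fun p => p.1 < p.2

/-- the function J_a from eq. (25)/(eq:J:wp:compact). -/
noncomputable def Ja (K Lr Ls : ℕ) (c c' : Fin Lr × Fin Lr → ℝ) (d d' : Fin Ls × Fin Ls → ℝ)
    (x : Fin Lr → ℝ) (z : Fin Ls → ℝ) (y : Fin Lr → ℝ) (v : Fin Ls → ℝ) : ℝ :=
  (∑ w ∈ pairs Lr, c w * fK K (x w.2 - x w.1) (y w.2 - y w.1)) +
  (∑ p ∈ pairs Ls, d p * fK K (z p.2 - z p.1) (v p.2 - v p.1)) +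
  ∑ w ∈ pairs Lr, ∑ p ∈ pairs Ls, (c' w * d' p / 2) *
    (fK K ((x w.2 - x w.1) + (z p.2 - z p.1)) ((y w.2 - y w.1) + (v p.2 - v p.1)) +
     fK K ((x w.2 - x w.1) - (z p.2 - z p.1)) ((y w.2 - y w.1) - (v p.2 - v p.1)))

/-- D_X ⊂ 𝒳*: all phase-slope differences Δx_w, Δz_p, Δx_w ± Δz_p lie in 𝒳*. -/
def DXsub (K Lr Ls : ℕ) (x : Fin Lr → ℝ) (z : Fin Ls → ℝ) : Prop :=
  (∀ w ∈ pairs Lr, x w.2 - x w.1 ∈ Xstar K) ∧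
  (∀ p ∈ pairs Ls, z p.2 - z p.1 ∈ Xstar K) ∧
  (∀ w ∈ pairs Lr, ∀ p ∈ pairs Ls,
    (x w.2 - x w.1) + (z p.2 - z p.1) ∈ Xstar K ∧
    (x w.2 - x w.1) - (z p.2 - z p.1) ∈ Xstar K)

/-! ### Auxiliary lemmas -/

lemma fK_add_pi (K : ℕ) (x y : ℝ) : fK K x (y + π) = - fK K x y := by
  unfold fK
  rw [← Finset.sum_neg_distrib]
  refine Finset.sum_congr rfl fun k _ => ?_
  rw [show y + π - 2 * (k:ℝ) * x = (y - 2 * k * x) + π by ring, Real.cos_add_pi]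

lemma fK_sub_pi (K : ℕ) (x y : ℝ) : fK K x (y - π) = - fK K x y := by
  have := fK_add_pi K x (y - π)
  simp at this
  linarith

lemma fK_ge (K : ℕ) (x y : ℝ) : -(K:ℝ) ≤ fK K x y := by
  calc -(K:ℝ) = ∑ _k ∈ Finset.range K, (-1 : ℝ) := by simp
  _ ≤ _ := Finset.sum_le_sum fun k _ => Real.neg_one_le_cos _

lemma fK_zero (K : ℕ) (hK : 1 ≤ K) (x : ℝ) (hx : x ∈ Xstar K) (y : ℝ) : fK K x y = 0 := by
  obtain ⟨⟨q, hq⟩, hn⟩ := hx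
  have hKne : (K:ℝ) ≠ 0 := Nat.cast_ne_zero.mpr (by omega)
  have hKc : (K:ℂ) ≠ 0 := Nat.cast_ne_zero.mpr (by omega)
  set r : ℂ := Complex.exp ((-2 : ℂ) * x * Complex.I) with hr
  have hre : fK K x y = (Complex.exp (y * Complex.I) * ∑ k ∈ Finset.range K, r ^ k).re := by
    rw [Finset.mul_sum, Complex.re_sum]
    refine Finset.sum_congr rfl fun k _ => ?_
    rw [hr, ← Complex.exp_nat_mul, ← Complex.exp_add]
    rw [show (y:ℂ) * Complex.I + (k:ℕ) * ((-2 : ℂ) * x * Complex.I)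
        = ((y - 2 * (k:ℝ) * x : ℝ):ℂ) * Complex.I by push_cast; ring]
    exact (Complex.exp_ofReal_mul_I_re _).symm
  have hne1 : r ≠ 1 := by
    rw [hr]
    intro h
    rw [Complex.exp_eq_one_iff] at h
    obtain ⟨n, hn'⟩ := h
    have : ((-2*x : ℝ):ℂ) = ((n * 2 * π : ℝ):ℂ) := by
      push_cast
      exact mul_right_cancel₀ Complex.I_ne_zero (by linear_combination hn')
    have hr2 : (-2*x : ℝ) = (n:ℝ) * 2 * π := by exact_mod_cast this
    exact hn (-n) (by push_cast; linarith)
  have hpow : r ^ K = 1 := by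
    rw [hr, ← Complex.exp_nat_mul]
    rw [show (K:ℂ) * ((-2 : ℂ) * x * Complex.I) = (-q : ℤ) * (2 * (π:ℂ) * Complex.I) by
      push_cast [hq]; field_simp]
    exact Complex.exp_int_mul_two_pi_mul_I _
  rw [hre, geom_sum_eq hne1, hpow]
  simp

/-- boolean-cube point -/
noncomputable def Yb {L : ℕ} (ε : Fin L → Bool) : Fin L → ℝ := fun i => if ε i then π else 0

lemma Yb_mem_cube {L : ℕ} (ε : Fin L → Bool) : Yb ε ∈ cube L := by
  intro i _
  have hp := Real.pi_pos
  simp only [Yb, Set.mem_Ico]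
  split <;> constructor <;> nlinarith

lemma zero_mem_cube (L : ℕ) : (fun _ => (0:ℝ)) ∈ cube L := by
  intro i _
  exact ⟨le_refl _, Real.two_pi_pos⟩

lemma sum_fK_flip {L : ℕ} (K : ℕ) (Δ : ℝ) (j : Fin L) (θ : (Fin L → Bool) → ℝ)
    (hθ : ∀ ε, θ (Function.update ε j (!ε j)) = θ ε + π ∨
               θ (Function.update ε j (!ε j)) = θ ε - π) :
    ∑ ε : Fin L → Bool, fK K Δ (θ ε) = 0 := by
  refine Finset.sum_involution (fun ε _ => Function.update ε j (!ε j)) ?_ ?_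
    (fun _ _ => Finset.mem_univ _) ?_
  · intro ε _
    rcases hθ ε with h | h <;> rw [h]
    · rw [fK_add_pi]; ring
    · rw [fK_sub_pi]; ring
  · intro ε _ _ hcon
    have := congrFun hcon j
    simp at this
  · intro ε _
    funext i
    by_cases hij : i = j
    · subst hij
      simp [Function.update_idem, Function.update_self]
    · simp [Function.update_of_ne hij]

lemma flip_arg {L : ℕ} (ε : Fin L → Bool) (i j : Fin L) (hij : i ≠ j) (C : ℝ) :
    (Yb (Function.update ε j (!ε j)) j - Yb (Function.update ε j (!ε j)) i) + C
      = ((Yb ε j - Yb ε i) + C) + π ∨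
    (Yb (Function.update ε j (!ε j)) j - Yb (Function.update ε j (!ε j)) i) + C
      = ((Yb ε j - Yb ε i) + C) - π := by
  have hi : Yb (Function.update ε j (!ε j)) i = Yb ε i := by
    simp only [Yb]
    rw [Function.update_of_ne hij]
  have hj : Yb (Function.update ε j (!ε j)) j = if !ε j then π else 0 := by
    simp [Yb]
  rw [hi, hj]
  cases h : ε j <;> simp [Yb, h] <;> [left; right] <;> ring

/-- Σ over the boolean cube of fK of a difference (+C) vanishes. -/
lemma sum_fK_diff {L : ℕ} (K : ℕ) (Δ : ℝ) (w : Fin L × Fin L) (hw : w ∈ pairs L) (C : ℝ) :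
    ∑ ε : Fin L → Bool, fK K Δ ((Yb ε w.2 - Yb ε w.1) + C) = 0 := by
  have hne : w.1 ≠ w.2 := by
    have := (Finset.mem_filter.mp hw).2
    exact ne_of_lt this
  exact sum_fK_flip K Δ w.2 _ (fun ε => flip_arg ε w.1 w.2 hne C)

/-- lower bound on Ja. -/
lemma Ja_lb (K Lr Ls : ℕ) (c c' : Fin Lr × Fin Lr → ℝ) (d d' : Fin Ls × Fin Ls → ℝ)
    (hc : ∀ w, 0 ≤ c w) (hc' : ∀ w, 0 ≤ c' w) (hd : ∀ p, 0 ≤ d p) (hd' : ∀ p, 0 ≤ d' p)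
    (x : Fin Lr → ℝ) (z : Fin Ls → ℝ) (y : Fin Lr → ℝ) (v : Fin Ls → ℝ) :
    -((K:ℝ) * ((∑ w ∈ pairs Lr, c w) + (∑ p ∈ pairs Ls, d p) +
        ∑ w ∈ pairs Lr, ∑ p ∈ pairs Ls, c' w * d' p)) ≤ Ja K Lr Ls c c' d d' x z y v := by
  unfold Ja
  have h1 : ∑ w ∈ pairs Lr, c w * (-(K:ℝ)) ≤
      ∑ w ∈ pairs Lr, c w * fK K (x w.2 - x w.1) (y w.2 - y w.1) :=
    Finset.sum_le_sum fun w _ => mul_le_mul_of_nonneg_left (fK_ge _ _ _) (hc w)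
  have h2 : ∑ p ∈ pairs Ls, d p * (-(K:ℝ)) ≤
      ∑ p ∈ pairs Ls, d p * fK K (z p.2 - z p.1) (v p.2 - v p.1) :=
    Finset.sum_le_sum fun p _ => mul_le_mul_of_nonneg_left (fK_ge _ _ _) (hd p)
  have h3 : ∑ w ∈ pairs Lr, ∑ p ∈ pairs Ls, (c' w * d' p / 2) * (-(2*(K:ℝ))) ≤
      ∑ w ∈ pairs Lr, ∑ p ∈ pairs Ls, (c' w * d' p / 2) *
        (fK K ((x w.2 - x w.1) + (z p.2 - z p.1)) ((y w.2 - y w.1) + (v p.2 - v p.1)) +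
         fK K ((x w.2 - x w.1) - (z p.2 - z p.1)) ((y w.2 - y w.1) - (v p.2 - v p.1))) := by
    refine Finset.sum_le_sum fun w _ => Finset.sum_le_sum fun p _ => ?_
    refine mul_le_mul_of_nonneg_left ?_
      (div_nonneg (mul_nonneg (hc' w) (hd' p)) (by norm_num))
    have := fK_ge K ((x w.2 - x w.1) + (z p.2 - z p.1)) ((y w.2 - y w.1) + (v p.2 - v p.1))
    have := fK_ge K ((x w.2 - x w.1) - (z p.2 - z p.1)) ((y w.2 - y w.1) - (v p.2 - v p.1))
    linarith
  have e1 : ∑ w ∈ pairs Lr, c w * (-(K:ℝ)) = -((K:ℝ) * ∑ w ∈ pairs Lr, c w) := by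
    rw [← Finset.sum_mul]; ring
  have e2 : ∑ p ∈ pairs Ls, d p * (-(K:ℝ)) = -((K:ℝ) * ∑ p ∈ pairs Ls, d p) := by
    rw [← Finset.sum_mul]; ring
  have e3 : ∑ w ∈ pairs Lr, ∑ p ∈ pairs Ls, (c' w * d' p / 2) * (-(2*(K:ℝ)))
      = -((K:ℝ) * ∑ w ∈ pairs Lr, ∑ p ∈ pairs Ls, c' w * d' p) := by
    rw [Finset.mul_sum, ← Finset.sum_neg_distrib]
    refine Finset.sum_congr rfl fun w _ => ?_
    rw [Finset.mul_sum, ← Finset.sum_neg_distrib]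
    refine Finset.sum_congr rfl fun p _ => ?_
    ring
  rw [e1] at h1; rw [e2] at h2; rw [e3] at h3
  linarith

/-- For DXsub points, Ja vanishes identically. -/
lemma Ja_dx_zero (K Lr Ls : ℕ) (hK : 1 ≤ K) (c c' : Fin Lr × Fin Lr → ℝ)
    (d d' : Fin Ls × Fin Ls → ℝ) (x : Fin Lr → ℝ) (z : Fin Ls → ℝ)
    (hD : DXsub K Lr Ls x z) (y : Fin Lr → ℝ) (v : Fin Ls → ℝ) :
    Ja K Lr Ls c c' d d' x z y v = 0 := by
  obtain ⟨hx, hz, hxz⟩ := hD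
  unfold Ja
  have A : ∑ w ∈ pairs Lr, c w * fK K (x w.2 - x w.1) (y w.2 - y w.1) = 0 :=
    Finset.sum_eq_zero fun w hw => by rw [fK_zero K hK _ (hx w hw), mul_zero]
  have B : ∑ p ∈ pairs Ls, d p * fK K (z p.2 - z p.1) (v p.2 - v p.1) = 0 :=
    Finset.sum_eq_zero fun p hp => by rw [fK_zero K hK _ (hz p hp), mul_zero]
  have C : ∑ w ∈ pairs Lr, ∑ p ∈ pairs Ls, (c' w * d' p / 2) *
      (fK K ((x w.2 - x w.1) + (z p.2 - z p.1)) ((y w.2 - y w.1) + (v p.2 - v p.1)) +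
       fK K ((x w.2 - x w.1) - (z p.2 - z p.1)) ((y w.2 - y w.1) - (v p.2 - v p.1))) = 0 :=
    Finset.sum_eq_zero fun w hw => Finset.sum_eq_zero fun p hp => by
      rw [fK_zero K hK _ (hxz w hw p hp).1, fK_zero K hK _ (hxz w hw p hp).2]
      ring
  rw [A, B, C]; ring

/-- Σ over the two boolean cubes of Ja vanishes. -/
lemma sum_Ja_zero (K Lr Ls : ℕ) (c c' : Fin Lr × Fin Lr → ℝ) (d d' : Fin Ls × Fin Ls → ℝ)
    (x : Fin Lr → ℝ) (z : Fin Ls → ℝ) :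
    ∑ ε : Fin Lr → Bool, ∑ δ : Fin Ls → Bool,
      Ja K Lr Ls c c' d d' x z (Yb ε) (Yb δ) = 0 := by
  unfold Ja
  have T1 : ∑ ε : Fin Lr → Bool, ∑ δ : Fin Ls → Bool,
      (∑ w ∈ pairs Lr, c w * fK K (x w.2 - x w.1) (Yb ε w.2 - Yb ε w.1)) = 0 := by
    rw [Finset.sum_congr rfl (fun ε _ => Finset.sum_const _)]
    have : ∑ ε : Fin Lr → Bool,
        (∑ w ∈ pairs Lr, c w * fK K (x w.2 - x w.1) (Yb ε w.2 - Yb ε w.1)) = 0 := by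
      rw [Finset.sum_comm]
      refine Finset.sum_eq_zero fun w hw => ?_
      rw [← Finset.mul_sum]
      have := sum_fK_diff K (x w.2 - x w.1) w hw 0
      simp only [add_zero] at this
      rw [this, mul_zero]
    calc ∑ ε : Fin Lr → Bool, (Finset.univ : Finset (Fin Ls → Bool)).card •
          (∑ w ∈ pairs Lr, c w * fK K (x w.2 - x w.1) (Yb ε w.2 - Yb ε w.1))
        = (Finset.univ : Finset (Fin Ls → Bool)).card •
          ∑ ε : Fin Lr → Bool, (∑ w ∈ pairs Lr, c w * fK K (x w.2 - x w.1) (Yb ε w.2 - Yb ε w.1)) := by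
          rw [Finset.smul_sum]
      _ = 0 := by rw [this, smul_zero]
  have T2 : ∑ ε : Fin Lr → Bool, ∑ δ : Fin Ls → Bool,
      (∑ p ∈ pairs Ls, d p * fK K (z p.2 - z p.1) (Yb δ p.2 - Yb δ p.1)) = 0 := by
    refine Finset.sum_eq_zero fun ε _ => ?_
    rw [Finset.sum_comm]
    refine Finset.sum_eq_zero fun p hp => ?_
    rw [← Finset.mul_sum]
    have := sum_fK_diff K (z p.2 - z p.1) p hp 0
    simp only [add_zero] at this
    rw [this, mul_zero]
  have T3 : ∑ ε : Fin Lr → Bool, ∑ δ : Fin Ls → Bool,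
      (∑ w ∈ pairs Lr, ∑ p ∈ pairs Ls, (c' w * d' p / 2) *
        (fK K ((x w.2 - x w.1) + (z p.2 - z p.1)) ((Yb ε w.2 - Yb ε w.1) + (Yb δ p.2 - Yb δ p.1)) +
         fK K ((x w.2 - x w.1) - (z p.2 - z p.1)) ((Yb ε w.2 - Yb ε w.1) - (Yb δ p.2 - Yb δ p.1)))) = 0 := by
    rw [Finset.sum_comm]
    refine Finset.sum_eq_zero fun δ _ => ?_
    rw [Finset.sum_comm]
    refine Finset.sum_eq_zero fun w hw => ?_
    rw [Finset.sum_comm]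
    refine Finset.sum_eq_zero fun p hp => ?_
    rw [← Finset.mul_sum]
    have hsum : ∑ ε : Fin Lr → Bool,
        (fK K ((x w.2 - x w.1) + (z p.2 - z p.1)) ((Yb ε w.2 - Yb ε w.1) + (Yb δ p.2 - Yb δ p.1)) +
         fK K ((x w.2 - x w.1) - (z p.2 - z p.1)) ((Yb ε w.2 - Yb ε w.1) - (Yb δ p.2 - Yb δ p.1))) = 0 := by
      rw [Finset.sum_add_distrib]
      rw [sum_fK_diff K ((x w.2 - x w.1) + (z p.2 - z p.1)) w hw (Yb δ p.2 - Yb δ p.1)]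
      have := sum_fK_diff K ((x w.2 - x w.1) - (z p.2 - z p.1)) w hw (-(Yb δ p.2 - Yb δ p.1))
      simp only [← sub_eq_add_neg] at this
      rw [this, add_zero]
    rw [hsum, mul_zero]
  calc ∑ ε : Fin Lr → Bool, ∑ δ : Fin Ls → Bool,
        ((∑ w ∈ pairs Lr, c w * fK K (x w.2 - x w.1) (Yb ε w.2 - Yb ε w.1)) +
         (∑ p ∈ pairs Ls, d p * fK K (z p.2 - z p.1) (Yb δ p.2 - Yb δ p.1)) +
         ∑ w ∈ pairs Lr, ∑ p ∈ pairs Ls, (c' w * d' p / 2) *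
           (fK K ((x w.2 - x w.1) + (z p.2 - z p.1)) ((Yb ε w.2 - Yb ε w.1) + (Yb δ p.2 - Yb δ p.1)) +
            fK K ((x w.2 - x w.1) - (z p.2 - z p.1)) ((Yb ε w.2 - Yb ε w.1) - (Yb δ p.2 - Yb δ p.1))))
      = (∑ ε : Fin Lr → Bool, ∑ δ : Fin Ls → Bool,
          (∑ w ∈ pairs Lr, c w * fK K (x w.2 - x w.1) (Yb ε w.2 - Yb ε w.1))) +
        (∑ ε : Fin Lr → Bool, ∑ δ : Fin Ls → Bool,
          (∑ p ∈ pairs Ls, d p * fK K (z p.2 - z p.1) (Yb δ p.2 - Yb δ p.1))) +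
        (∑ ε : Fin Lr → Bool, ∑ δ : Fin Ls → Bool,
          (∑ w ∈ pairs Lr, ∑ p ∈ pairs Ls, (c' w * d' p / 2) *
            (fK K ((x w.2 - x w.1) + (z p.2 - z p.1)) ((Yb ε w.2 - Yb ε w.1) + (Yb δ p.2 - Yb δ p.1)) +
             fK K ((x w.2 - x w.1) - (z p.2 - z p.1)) ((Yb ε w.2 - Yb ε w.1) - (Yb δ p.2 - Yb δ p.1))))) := by
          simp [Finset.sum_add_distrib]
    _ = 0 := by rw [T1, T2, T3]; ring

/-- membership in Xstar for qπ/K with 0 < q < K. -/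
lemma mem_Xstar (K : ℕ) (hK : 1 ≤ K) (q : ℤ) (h0 : 0 < q) (hq : q < K) :
    ((q:ℝ) * π / K) ∈ Xstar K := by
  constructor
  · exact ⟨q, rfl⟩
  · intro n hn
    have hKne : (K:ℝ) ≠ 0 := Nat.cast_ne_zero.mpr (by omega)
    rw [div_eq_iff hKne] at hn
    have h1 : (q:ℝ) = (n:ℝ) * (K:ℝ) :=
      mul_right_cancel₀ Real.pi_ne_zero
        (show (q:ℝ)*π = ((n:ℝ)*(K:ℝ))*π by linear_combination hn)
    have hq' : q = n * (K:ℤ) := by exact_mod_cast h1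
    have hK1 : (1:ℤ) ≤ (K:ℤ) := by exact_mod_cast hK
    rcases le_or_gt n 0 with h | h
    · nlinarith [hq']
    · have h1n : 1 ≤ n := h
      nlinarith [hq']

theorem stmt17 (K Lr Ls : ℕ) (hK : 1 ≤ K) (hLr : 1 ≤ Lr) (hLs : 1 ≤ Ls)
    (h2 : 2 < Lr + Ls) (hLL : Lr * Ls ≤ K)
    (G : ℝ) (hG : 0 ≤ G)
    (c c' : Fin Lr × Fin Lr → ℝ) (d d' : Fin Ls × Fin Ls → ℝ)
    (hc : ∀ w, 0 ≤ c w) (hc' : ∀ w, 0 ≤ c' w) (hd : ∀ p, 0 ≤ d p) (hd' : ∀ p, 0 ≤ d' p) :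
    sSup {r : ℝ | ∃ (x : Fin Lr → ℝ) (z : Fin Ls → ℝ),
        r = sInf {s : ℝ | ∃ y v, y ∈ cube Lr ∧ v ∈ cube Ls ∧
          s = (K : ℝ) * G + Ja K Lr Ls c c' d d' x z y v}} = (K : ℝ) * G ∧
    ∀ (x : Fin Lr → ℝ) (z : Fin Ls → ℝ), DXsub K Lr Ls x z →
      (sInf {s : ℝ | ∃ y v, y ∈ cube Lr ∧ v ∈ cube Ls ∧
          s = (K : ℝ) * G + Ja K Lr Ls c c' d d' x z y v} = (K : ℝ) * G ∧
       ∀ y ∈ cube Lr, ∀ v ∈ cube Ls,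
         (K : ℝ) * G + Ja K Lr Ls c c' d d' x z y v = (K : ℝ) * G) := by
  set KG : ℝ := (K : ℝ) * G with hKG
  set S : (Fin Lr → ℝ) → (Fin Ls → ℝ) → Set ℝ := fun x z =>
    {s : ℝ | ∃ y v, y ∈ cube Lr ∧ v ∈ cube Ls ∧
      s = KG + Ja K Lr Ls c c' d d' x z y v} with hS
  -- boundedness below
  have hBdd : ∀ x z, BddBelow (S x z) := by
    intro x z
    refine ⟨KG - (K:ℝ) * ((∑ w ∈ pairs Lr, c w) + (∑ p ∈ pairs Ls, d p) +
        ∑ w ∈ pairs Lr, ∑ p ∈ pairs Ls, c' w * d' p), ?_⟩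
    rintro s ⟨y, v, _, _, rfl⟩
    have := Ja_lb K Lr Ls c c' d d' hc hc' hd hd' x z y v
    linarith
  -- the infimum is always at most KG
  have hInf_le : ∀ x z, sInf (S x z) ≤ KG := by
    intro x z
    have hsum : ∑ p : (Fin Lr → Bool) × (Fin Ls → Bool),
        Ja K Lr Ls c c' d d' x z (Yb p.1) (Yb p.2) = 0 := by
      rw [Fintype.sum_prod_type]
      exact sum_Ja_zero K Lr Ls c c' d d' x z
    have hle : ∑ p : (Fin Lr → Bool) × (Fin Ls → Bool),
        Ja K Lr Ls c c' d d' x z (Yb p.1) (Yb p.2) ≤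
        ∑ _p : (Fin Lr → Bool) × (Fin Ls → Bool), (0:ℝ) := by
      rw [hsum]; simp
    obtain ⟨p, _, hp⟩ := Finset.exists_le_of_sum_le Finset.univ_nonempty hle
    have hmem : KG + Ja K Lr Ls c c' d d' x z (Yb p.1) (Yb p.2) ∈ S x z :=
      ⟨Yb p.1, Yb p.2, Yb_mem_cube p.1, Yb_mem_cube p.2, rfl⟩
    calc sInf (S x z) ≤ KG + Ja K Lr Ls c c' d d' x z (Yb p.1) (Yb p.2) :=
          csInf_le (hBdd x z) hmem
      _ ≤ KG := by linarith
  -- DXsub part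
  have hDX : ∀ (x : Fin Lr → ℝ) (z : Fin Ls → ℝ), DXsub K Lr Ls x z →
      (sInf (S x z) = KG ∧ ∀ y ∈ cube Lr, ∀ v ∈ cube Ls,
        KG + Ja K Lr Ls c c' d d' x z y v = KG) := by
    intro x z hD
    have hz : ∀ y v, Ja K Lr Ls c c' d d' x z y v = 0 :=
      Ja_dx_zero K Lr Ls hK c c' d d' x z hD
    have hSet : S x z = {KG} := by
      apply Set.eq_singleton_iff_unique_mem.mpr
      constructor
      · exact ⟨(fun _ => 0), (fun _ => 0), zero_mem_cube Lr, zero_mem_cube Ls,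
          by rw [hz]; ring⟩
      · rintro s ⟨y, v, _, _, rfl⟩
        rw [hz]; ring
    constructor
    · rw [hSet]; exact csInf_singleton KG
    · intro y _ v _; rw [hz]; ring
  -- witness in DXsub
  have hK1 : (1:ℤ) ≤ (K:ℤ) := by exact_mod_cast hK
  have hLs1 : (1:ℤ) ≤ (Ls:ℤ) := by exact_mod_cast hLs
  have hLL' : (Lr:ℤ) * (Ls:ℤ) ≤ (K:ℤ) := by exact_mod_cast hLL
  set xw : Fin Lr → ℝ := fun i => (((i:ℕ) * Ls : ℕ) : ℝ) * π / K with hxw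
  set zw : Fin Ls → ℝ := fun j => ((j:ℕ) : ℝ) * π / K with hzw
  have hDw : DXsub K Lr Ls xw zw := by
    refine ⟨?_, ?_, ?_⟩
    · intro w hw
      have hlt := (Finset.mem_filter.mp hw).2
      have ha : ((w.1:ℕ):ℤ) < ((w.2:ℕ):ℤ) := by exact_mod_cast hlt
      have hb : ((w.2:ℕ):ℤ) < (Lr:ℤ) := by exact_mod_cast w.2.isLt
      have heq : xw w.2 - xw w.1 = ((((w.2:ℕ):ℤ) * Ls - ((w.1:ℕ):ℤ) * Ls : ℤ):ℝ) * π / K := by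
        simp only [hxw]; push_cast; ring
      rw [heq]
      refine mem_Xstar K hK _ ?_ ?_
      · nlinarith
      · have h0 : (0:ℤ) ≤ ((w.1:ℕ):ℤ) := by positivity
        nlinarith
    · intro p hp
      have hlt := (Finset.mem_filter.mp hp).2
      have ha : ((p.1:ℕ):ℤ) < ((p.2:ℕ):ℤ) := by exact_mod_cast hlt
      have hb : ((p.2:ℕ):ℤ) < (Ls:ℤ) := by exact_mod_cast p.2.isLt
      have heq : zw p.2 - zw p.1 = ((((p.2:ℕ):ℤ) - ((p.1:ℕ):ℤ) : ℤ):ℝ) * π / K := by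
        simp only [hzw]; push_cast; ring
      rw [heq]
      refine mem_Xstar K hK _ (by omega) ?_
      have hLr1 : (1:ℤ) ≤ (Lr:ℤ) := by exact_mod_cast hLr
      have h0 : (0:ℤ) ≤ ((p.1:ℕ):ℤ) := by positivity
      nlinarith
    · intro w hw p hp
      have hltw := (Finset.mem_filter.mp hw).2
      have hltp := (Finset.mem_filter.mp hp).2
      have ha : ((w.1:ℕ):ℤ) < ((w.2:ℕ):ℤ) := by exact_mod_cast hltw
      have hb : ((w.2:ℕ):ℤ) < (Lr:ℤ) := by exact_mod_cast w.2.isLt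
      have ha' : ((p.1:ℕ):ℤ) < ((p.2:ℕ):ℤ) := by exact_mod_cast hltp
      have hb' : ((p.2:ℕ):ℤ) < (Ls:ℤ) := by exact_mod_cast p.2.isLt
      have h0 : (0:ℤ) ≤ ((w.1:ℕ):ℤ) := by positivity
      have h0' : (0:ℤ) ≤ ((p.1:ℕ):ℤ) := by positivity
      constructor
      · have heq : xw w.2 - xw w.1 + (zw p.2 - zw p.1) =
            ((((w.2:ℕ):ℤ) * Ls - ((w.1:ℕ):ℤ) * Ls + (((p.2:ℕ):ℤ) - ((p.1:ℕ):ℤ)) : ℤ):ℝ) * π / K := by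
          simp only [hxw, hzw]; push_cast; ring
        rw [heq]
        refine mem_Xstar K hK _ (by nlinarith) (by nlinarith)
      · have heq : xw w.2 - xw w.1 - (zw p.2 - zw p.1) =
            ((((w.2:ℕ):ℤ) * Ls - ((w.1:ℕ):ℤ) * Ls - (((p.2:ℕ):ℤ) - ((p.1:ℕ):ℤ)) : ℤ):ℝ) * π / K := by
          simp only [hxw, hzw]; push_cast; ring
        rw [heq]
        refine mem_Xstar K hK _ (by nlinarith) (by nlinarith)
  constructor
  · apply IsGreatest.csSup_eq
    constructor
    · exact ⟨xw, zw, ((hDX xw zw hDw).1).symm⟩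
    · rintro r ⟨x, z, rfl⟩
      exact hInf_le x z
  · exact hDX
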